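/- (Output ODE for weak solutions.) Let T > 0 and let (f,S) be a weak solution on [0,T] with input D ∈ L^∞_loc([0,∞);[0,∞)) and initial condition (f₀,S₀) ∈ X. Then for every bounded φ ∈ C¹([0,∞)) with bounded derivative φ', the map t ↦ ∫₀^∞ f(t,a)φ(a) da is absolutely continuous on [0,T] and satisfies, for almost every t ∈ [0,T], (d/dt) ∫₀^∞ f(t,a)φ(a) da = f(t,0)·φ(0) + ∫₀^∞ (φ'(a) − (β(a)+D(t))φ(a)) f(t,a) da. -/

import Mathlib

open MeasureTheory Set Filter

noncomputable section

/-- Membership in the state space `X`: `f` is a positive continuous integrable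
age-distribution vanishing at infinity, `S ∈ (0, S_in)`, and the renewal
compatibility condition `f(0) = μ(S)·∫₀^∞ k(a) f(a) da` holds. -/
def MemX (μ k : ℝ → ℝ) (S_in : ℝ) (f : ℝ → ℝ) (S : ℝ) : Prop :=
  ContinuousOn f (Ici 0) ∧ (∀ a, 0 ≤ a → 0 < f a) ∧
  Tendsto f atTop (nhds 0) ∧ IntegrableOn f (Ioi 0) ∧
  S ∈ Ioo 0 S_in ∧ f 0 = μ S * ∫ a in Ioi (0:ℝ), k a * f a

/-- Admissible inputs: `D ∈ L^∞_loc([0,∞); [0,∞))` (represented by a measurable,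
non-negative function bounded on every compact interval `[0,T]`). -/
def AdmissibleInput (D : ℝ → ℝ) : Prop :=
  Measurable D ∧ (∀ t, 0 ≤ t → 0 ≤ D t) ∧
  ∀ T, 0 < T → ∃ C, ∀ t ∈ Icc (0:ℝ) T, D t ≤ C

/-- Standing assumptions on the model data `μ, β, k, q : [0,∞) → [0,∞)` and `S_in > 0`:
all are bounded continuous non-negative, `μ ∈ C¹`, `μ(0) = 0`, `μ(S) > 0` for `S > 0`,
and `∫₀^∞ k > 0`, `∫₀^∞ q > 0`. -/
def ModelHyp (μ β k q : ℝ → ℝ) (S_in : ℝ) : Prop :=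
  ContinuousOn μ (Ici 0) ∧ (∀ s, 0 ≤ s → 0 ≤ μ s) ∧ (∃ C, ∀ s, 0 ≤ s → μ s ≤ C) ∧
  ContDiffOn ℝ 1 μ (Ici 0) ∧ μ 0 = 0 ∧ (∀ s, 0 < s → 0 < μ s) ∧
  ContinuousOn β (Ici 0) ∧ (∀ a, 0 ≤ a → 0 ≤ β a) ∧ (∃ C, ∀ a, 0 ≤ a → β a ≤ C) ∧
  ContinuousOn k (Ici 0) ∧ (∀ a, 0 ≤ a → 0 ≤ k a) ∧ (∃ C, ∀ a, 0 ≤ a → k a ≤ C) ∧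
  ContinuousOn q (Ici 0) ∧ (∀ a, 0 ≤ a → 0 ≤ q a) ∧ (∃ C, ∀ a, 0 ≤ a → q a ≤ C) ∧
  (0 < ∫⁻ a in Ioi (0:ℝ), ENNReal.ofReal (k a)) ∧
  (0 < ∫⁻ a in Ioi (0:ℝ), ENNReal.ofReal (q a)) ∧
  0 < S_in

/-- Test functions for the weak formulation: `φ` is bounded, of class `C¹` on
`[0,T]×[0,∞)` (with partial derivatives `φt`, `φa`), and `∂φ/∂a + ∂φ/∂t` is bounded. -/
def TestFun (T : ℝ) (φ φt φa : ℝ → ℝ → ℝ) : Prop :=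
  ContinuousOn (fun p : ℝ × ℝ => φ p.1 p.2) (Icc 0 T ×ˢ Ici (0:ℝ)) ∧
  ContinuousOn (fun p : ℝ × ℝ => φt p.1 p.2) (Icc 0 T ×ˢ Ici (0:ℝ)) ∧
  ContinuousOn (fun p : ℝ × ℝ => φa p.1 p.2) (Icc 0 T ×ˢ Ici (0:ℝ)) ∧
  (∀ s ∈ Icc 0 T, ∀ a ∈ Ici (0:ℝ),
    HasDerivAt (fun u => φ u a) (φt s a) s ∧ HasDerivAt (fun u => φ s u) (φa s a) a) ∧
  (∃ C, ∀ s ∈ Icc 0 T, ∀ a ∈ Ici (0:ℝ), |φ s a| ≤ C) ∧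
  (∃ C, ∀ s ∈ Icc 0 T, ∀ a ∈ Ici (0:ℝ), |φa s a + φt s a| ≤ C)

/-- Weak solution on `[0,T]` with input `D` and initial condition `(f₀,S₀)` of the
age-structured chemostat (2.1)–(2.3), (2.6): a continuous map `t ↦ (f[t],S(t))` into `X`
(jointly continuous and `L¹`-continuous in time), satisfying the initial condition, the
renewal boundary condition for all `t`, the substrate equation in integrated
(absolutely continuous / a.e.) form, and the weak (test function) formulation of the PDE. -/
def IsWeakSolution (μ β k q : ℝ → ℝ) (S_in : ℝ) (D : ℝ → ℝ) (T : ℝ)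
    (f : ℝ → ℝ → ℝ) (S : ℝ → ℝ) (f₀ : ℝ → ℝ) (S₀ : ℝ) : Prop :=
  (∀ a, 0 ≤ a → f 0 a = f₀ a) ∧ S 0 = S₀ ∧
  (∀ t ∈ Icc 0 T, MemX μ k S_in (f t) (S t)) ∧
  (∀ t₀ ∈ Icc 0 T, Tendsto (fun t => ∫ a in Ioi (0:ℝ), |f t a - f t₀ a|)
      (nhdsWithin t₀ (Icc 0 T)) (nhds 0)) ∧
  ContinuousOn (fun p : ℝ × ℝ => f p.1 p.2) (Icc 0 T ×ˢ Ici (0:ℝ)) ∧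
  ContinuousOn S (Icc 0 T) ∧
  (∀ t ∈ Icc 0 T, f t 0 = μ (S t) * ∫ a in Ioi (0:ℝ), k a * f t a) ∧
  (∀ t ∈ Icc 0 T, S t = S₀ + ∫ s in (0:ℝ)..t,
      (D s * (S_in - S s) - μ (S s) * ∫ a in Ioi (0:ℝ), q a * f s a)) ∧
  (∀ φ φt φa, TestFun T φ φt φa → ∀ t ∈ Icc 0 T,
    (∫ a in Ioi (0:ℝ), f₀ a * φ 0 a) + (∫ s in (0:ℝ)..t, f s 0 * φ s 0)
      = (∫ a in Ioi (0:ℝ), f t a * φ t a)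
        + ∫ s in (0:ℝ)..t, ∫ a in Ioi (0:ℝ),
            ((β a + D s) * φ s a - φa s a - φt s a) * f s a)

private lemma bdd_mul_integrable (g h : ℝ → ℝ) (hg : IntegrableOn g (Ioi 0))
    (hm : AEStronglyMeasurable h (volume.restrict (Ioi 0)))
    (C : ℝ) (hC : ∀ a ∈ Ioi (0:ℝ), |h a| ≤ C) :
    IntegrableOn (fun a => h a * g a) (Ioi 0) := by
  refine Integrable.mono' (hg.abs.const_mul C) (hm.mul hg.1) ?_
  filter_upwards [ae_restrict_mem measurableSet_Ioi] with a ha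
  rw [Real.norm_eq_abs, abs_mul]
  exact mul_le_mul_of_nonneg_right (hC a ha) (abs_nonneg _)

private lemma cont_param_integral (T : ℝ) (f : ℝ → ℝ → ℝ)
    (hint : ∀ t ∈ Icc (0:ℝ) T, IntegrableOn (f t) (Ioi 0))
    (hL1 : ∀ t₀ ∈ Icc (0:ℝ) T, Tendsto (fun t => ∫ a in Ioi (0:ℝ), |f t a - f t₀ a|)
      (nhdsWithin t₀ (Icc 0 T)) (nhds 0))
    (h : ℝ → ℝ) (hm : AEStronglyMeasurable h (volume.restrict (Ioi 0)))
    (C : ℝ) (hC : ∀ a ∈ Ioi (0:ℝ), |h a| ≤ C) :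
    ContinuousOn (fun s => ∫ a in Ioi (0:ℝ), h a * f s a) (Icc 0 T) := by
  intro t₀ ht₀
  have hi : ∀ s ∈ Icc (0:ℝ) T, IntegrableOn (fun a => h a * f s a) (Ioi 0) :=
    fun s hs => bdd_mul_integrable (f s) h (hint s hs) hm C hC
  have key : Tendsto
      (fun s => (∫ a in Ioi (0:ℝ), h a * f s a) - ∫ a in Ioi (0:ℝ), h a * f t₀ a)
      (nhdsWithin t₀ (Icc 0 T)) (nhds 0) := by
    refine squeeze_zero_norm' ?_ (by simpa using (hL1 t₀ ht₀).const_mul C)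
    filter_upwards [eventually_mem_nhdsWithin] with s hs
    have hdiff : IntegrableOn (fun a => f s a - f t₀ a) (Ioi 0) :=
      (hint s hs).sub (hint t₀ ht₀)
    have hprod : IntegrableOn (fun a => h a * (f s a - f t₀ a)) (Ioi 0) :=
      bdd_mul_integrable _ h hdiff hm C hC
    have heq : (∫ a in Ioi (0:ℝ), h a * f s a) - ∫ a in Ioi (0:ℝ), h a * f t₀ a
        = ∫ a in Ioi (0:ℝ), h a * (f s a - f t₀ a) := by
      rw [← integral_sub (hi s hs) (hi t₀ ht₀)]
      congr 1; funext a; ring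
    rw [heq]
    calc ‖∫ a in Ioi (0:ℝ), h a * (f s a - f t₀ a)‖
        ≤ ∫ a in Ioi (0:ℝ), ‖h a * (f s a - f t₀ a)‖ :=
          norm_integral_le_integral_norm _
      _ ≤ ∫ a in Ioi (0:ℝ), C * |f s a - f t₀ a| := by
          refine integral_mono_ae hprod.norm (hdiff.abs.const_mul C) ?_
          filter_upwards [ae_restrict_mem measurableSet_Ioi] with a ha
          rw [Real.norm_eq_abs, abs_mul]
          exact mul_le_mul_of_nonneg_right (hC a ha) (abs_nonneg _)
      _ = C * ∫ a in Ioi (0:ℝ), |f s a - f t₀ a| := integral_const_mul _ _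
  exact tendsto_sub_nhds_zero_iff.mp key

/-- **Output ODE for weak solutions (Remark 1, eq. (2.8)).** For every weak solution
`(f,S)` on `[0,T]` and every bounded `φ ∈ C¹([0,∞))` with bounded derivative `φd`, the
map `t ↦ ∫₀^∞ f(t,a)φ(a) da` is absolutely continuous on `[0,T]` with a.e. derivative
`f(t,0)φ(0) + ∫₀^∞ (φ'(a) − (β(a)+D(t))φ(a)) f(t,a) da`; equivalently (in integrated
form), for all `t ∈ [0,T]`:
`∫₀^∞ f(t,a)φ(a) da = ∫₀^∞ f₀(a)φ(a) da + ∫₀^t (f(s,0)φ(0) + ∫₀^∞ (φ'(a) − (β(a)+D(s))φ(a)) f(s,a) da) ds`. -/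
theorem output_ode_for_weak_solutions
    (μ β k q : ℝ → ℝ) (S_in : ℝ) (hmodel : ModelHyp μ β k q S_in)
    (T : ℝ) (hT : 0 < T)
    (D : ℝ → ℝ) (hD : AdmissibleInput D)
    (f : ℝ → ℝ → ℝ) (S : ℝ → ℝ) (f₀ : ℝ → ℝ) (S₀ : ℝ)
    (hX : MemX μ k S_in f₀ S₀)
    (hsol : IsWeakSolution μ β k q S_in D T f S f₀ S₀)
    (φ φd : ℝ → ℝ)
    (hφc : ContinuousOn φ (Ici 0)) (hφdc : ContinuousOn φd (Ici 0))
    (hφ' : ∀ a, 0 ≤ a → HasDerivAt φ (φd a) a)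
    (hφb : ∃ C, ∀ a, 0 ≤ a → |φ a| ≤ C)
    (hφdb : ∃ C, ∀ a, 0 ≤ a → |φd a| ≤ C) :
    ∀ t ∈ Icc 0 T,
      (∫ a in Ioi (0:ℝ), f t a * φ a)
        = (∫ a in Ioi (0:ℝ), f₀ a * φ a)
          + ∫ s in (0:ℝ)..t,
              (f s 0 * φ 0
                + ∫ a in Ioi (0:ℝ), (φd a - (β a + D s) * φ a) * f s a) := by
  obtain ⟨hinit, hS0, hX', hL1, hjoint, hScont, hbc, hSode, hweak⟩ := hsol
  obtain ⟨Cφ, hCφ⟩ := hφb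
  obtain ⟨Cφd, hCφd⟩ := hφdb
  obtain ⟨Cβ, hCβ⟩ := hmodel.2.2.2.2.2.2.2.2.1
  have hβ0 := hmodel.2.2.2.2.2.2.2.1
  have hβc := hmodel.2.2.2.2.2.2.1
  have hCφ0 : 0 ≤ Cφ := le_trans (abs_nonneg _) (hCφ 0 le_rfl)
  -- integrability of f t on (0,∞)
  have hfint : ∀ t ∈ Icc (0:ℝ) T, IntegrableOn (f t) (Ioi 0) :=
    fun t ht => (hX' t ht).2.2.2.1
  -- test function
  have htest : TestFun T (fun _ a => φ a) (fun _ _ => 0) (fun _ a => φd a) := by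
    refine ⟨hφc.comp continuous_snd.continuousOn (fun p hp => hp.2),
      continuousOn_const,
      hφdc.comp continuous_snd.continuousOn (fun p hp => hp.2),
      fun s _ a ha => ⟨hasDerivAt_const s (φ a), hφ' a ha⟩,
      ⟨Cφ, fun s _ a ha => hCφ a ha⟩,
      ⟨Cφd, fun s _ a ha => by simpa using hCφd a ha⟩⟩
  intro t ht
  have ht0 : (0:ℝ) ≤ t := ht.1
  have htT : t ≤ T := ht.2
  have hw := hweak _ _ _ htest t ht
  simp only [sub_zero] at hw
  -- abbreviations
  set G : ℝ → ℝ := fun s => ∫ a in Ioi (0:ℝ), ((β a + D s) * φ a - φd a) * f s a with hGdef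
  set H : ℝ → ℝ := fun s => f s 0 * φ 0 with hHdef
  -- measurability and bounds for the two pieces
  have hm1 : AEStronglyMeasurable (fun a => β a * φ a - φd a) (volume.restrict (Ioi 0)) :=
    (((hβc.mul hφc).sub hφdc).mono Ioi_subset_Ici_self).aestronglyMeasurable measurableSet_Ioi
  have hm2 : AEStronglyMeasurable φ (volume.restrict (Ioi 0)) :=
    (hφc.mono Ioi_subset_Ici_self).aestronglyMeasurable measurableSet_Ioi
  have hb1 : ∀ a ∈ Ioi (0:ℝ), |β a * φ a - φd a| ≤ Cβ * Cφ + Cφd := by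
    intro a ha
    have ha' : (0:ℝ) ≤ a := le_of_lt ha
    have h1 : |β a * φ a - φd a| ≤ |β a * φ a| + |φd a| := by
      have := abs_add_le (β a * φ a) (-(φd a))
      simpa [sub_eq_add_neg] using this
    refine h1.trans (add_le_add ?_ (hCφd a ha'))
    rw [abs_mul]
    have hba : |β a| ≤ Cβ := by
      rw [abs_of_nonneg (hβ0 a ha')]; exact hCβ a ha'
    exact mul_le_mul hba (hCφ a ha') (abs_nonneg _) (le_trans (hβ0 0 le_rfl) (hCβ 0 le_rfl))
  have hb2 : ∀ a ∈ Ioi (0:ℝ), |φ a| ≤ Cφ := fun a ha => hCφ a (le_of_lt ha)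
  -- the two continuous parametrized integrals
  have cont1 : ContinuousOn (fun s => ∫ a in Ioi (0:ℝ), (β a * φ a - φd a) * f s a)
      (Icc 0 T) := cont_param_integral T f hfint hL1 _ hm1 _ hb1
  have cont2 : ContinuousOn (fun s => ∫ a in Ioi (0:ℝ), φ a * f s a)
      (Icc 0 T) := cont_param_integral T f hfint hL1 _ hm2 _ hb2
  -- decomposition of G on [0,T]
  have hsplit : ∀ s ∈ Icc (0:ℝ) T,
      G s = (∫ a in Ioi (0:ℝ), (β a * φ a - φd a) * f s a)
        + D s * ∫ a in Ioi (0:ℝ), φ a * f s a := by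
    intro s hs
    have i1 : IntegrableOn (fun a => (β a * φ a - φd a) * f s a) (Ioi 0) :=
      bdd_mul_integrable (f s) _ (hfint s hs) hm1 _ hb1
    have i2 : IntegrableOn (fun a => φ a * f s a) (Ioi 0) :=
      bdd_mul_integrable (f s) _ (hfint s hs) hm2 _ hb2
    have : G s = ∫ a in Ioi (0:ℝ),
        ((β a * φ a - φd a) * f s a + D s * (φ a * f s a)) := by
      simp only [hGdef]; congr 1; funext a; ring
    rw [this, integral_add i1 (i2.const_mul (D s)), integral_const_mul]
  -- interval integrability of H
  have hsubIcc : Icc (0:ℝ) t ⊆ Icc (0:ℝ) T := Icc_subset_Icc le_rfl htT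
  have hf0cont : ContinuousOn (fun s => f s 0) (Icc 0 T) := by
    have : ContinuousOn (fun s : ℝ => ((s, (0:ℝ)) : ℝ × ℝ)) (Icc 0 T) :=
      (continuous_id.prodMk continuous_const).continuousOn
    exact hjoint.comp this (fun s hs => ⟨hs, self_mem_Ici⟩)
  have hH : IntervalIntegrable H volume 0 t := by
    apply ContinuousOn.intervalIntegrable
    rw [uIcc_of_le ht0]
    exact (hf0cont.mul continuousOn_const).mono hsubIcc
  -- interval integrability of G
  have hG : IntervalIntegrable G volume 0 t := by
    rw [intervalIntegrable_iff_integrableOn_Ioc_of_le ht0]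
    have hsubIoc : Ioc (0:ℝ) t ⊆ Icc (0:ℝ) T :=
      fun s hs => ⟨hs.1.le, hs.2.trans htT⟩
    have hint' : IntegrableOn (fun s => (∫ a in Ioi (0:ℝ), (β a * φ a - φd a) * f s a)
        + D s * ∫ a in Ioi (0:ℝ), φ a * f s a) (Ioc 0 t) := by
      refine Integrable.add ?_ ?_
      · exact ((cont1.mono hsubIcc).integrableOn_Icc).mono_set Ioc_subset_Icc_self
      · obtain ⟨CD, hCD⟩ := hD.2.2 T hT
        obtain ⟨M2, hM2⟩ := isCompact_Icc.exists_bound_of_continuousOn cont2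
        have hCD0 : 0 ≤ CD := le_trans (hD.2.1 0 le_rfl) (hCD 0 ⟨le_rfl, hT.le⟩)
        have hM20 : 0 ≤ M2 := le_trans (norm_nonneg _) (hM2 0 ⟨le_rfl, hT.le⟩)
        have hmeas : AEStronglyMeasurable
            (fun s => D s * ∫ a in Ioi (0:ℝ), φ a * f s a)
            (volume.restrict (Ioc 0 t)) := by
          refine AEStronglyMeasurable.mul (hD.1.aestronglyMeasurable.restrict) ?_
          exact ((cont2.mono hsubIcc).aestronglyMeasurable
            measurableSet_Icc).mono_measure
            (Measure.restrict_mono Ioc_subset_Icc_self le_rfl)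
        refine Integrable.mono'
          (integrableOn_const (μ := volume) (s := Ioc 0 t) (C := CD * M2) measure_Ioc_lt_top.ne) hmeas ?_
        filter_upwards [ae_restrict_mem measurableSet_Ioc] with s hs
        have hsmem : s ∈ Icc (0:ℝ) T := hsubIoc hs
        rw [Real.norm_eq_abs, abs_mul]
        have hDs : |D s| ≤ CD := by
          rw [abs_of_nonneg (hD.2.1 s hsmem.1)]; exact hCD s hsmem
        exact mul_le_mul hDs (hM2 s hsmem) (abs_nonneg _) hCD0
    refine hint'.congr ?_
    filter_upwards [ae_restrict_mem measurableSet_Ioc] with s hs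
    exact (hsplit s (hsubIoc hs)).symm
  -- rewrite the inner integral in the goal as  -G s
  have hneg : ∀ s, (∫ a in Ioi (0:ℝ), (φd a - (β a + D s) * φ a) * f s a) = -G s := by
    intro s
    rw [hGdef, ← integral_neg]
    congr 1; funext a; ring
  have hgoal : (∫ s in (0:ℝ)..t,
      (f s 0 * φ 0 + ∫ a in Ioi (0:ℝ), (φd a - (β a + D s) * φ a) * f s a))
      = (∫ s in (0:ℝ)..t, H s) - ∫ s in (0:ℝ)..t, G s := by
    rw [← intervalIntegral.integral_sub hH hG]
    apply intervalIntegral.integral_congr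
    intro s _
    simp only [hneg, hHdef]
    ring
  rw [hgoal]
  linarith [hw]
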